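/- Let A = [[0, a_{12}, a_{13}], [0, 0, a_{23}], [0, 0, 0]] ∈ M_3(ℂ) with a_{12}, a_{23} > 0 real. Then ‖A‖² = (1/2)(a_{12}² + a_{23}² + |a_{13}|² + √((a_{12}² + a_{23}² + |a_{13}|²)² − 4 a_{12}² a_{23}²)). -/

import Mathlib

open Matrix

private lemma aux_amgm (α β a c X Y Z : ℝ) (hα : 0 ≤ α) (hβ : 0 ≤ β)
    (hX : 0 ≤ X) (hY : 0 ≤ Y) (hprod : α*β = 4*a^2*c) (hZ : Z^2 ≤ c*(X*Y)) :
    4*a*Z ≤ α*X + β*Y := by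
  have h2 : 0 ≤ α*X + β*Y := add_nonneg (mul_nonneg hα hX) (mul_nonneg hβ hY)
  have hpXY : α*β*(X*Y) = 4*a^2*c*(X*Y) := by rw [hprod]
  have hZ' : a^2*Z^2 ≤ a^2*(c*(X*Y)) := mul_le_mul_of_nonneg_left hZ (sq_nonneg a)
  have h1 : (4*a*Z)^2 ≤ (α*X+β*Y)^2 := by nlinarith [sq_nonneg (α*X-β*Y), hpXY, hZ']
  nlinarith [h1, h2]

private lemma quad_le (a12 a23 cr ci lam p q r s : ℝ)
    (hα : 0 ≤ lam - a12^2) (hβ : 0 ≤ lam - a23^2 - (cr^2+ci^2))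
    (hprod : (lam - a12^2) * (lam - a23^2 - (cr^2+ci^2)) = a12^2*(cr^2+ci^2)) :
    (a12*p + (cr*r - ci*s))^2 + (a12*q + (cr*s + ci*r))^2 + a23^2*(r^2+s^2)
      ≤ lam * ((p^2+q^2) + (r^2+s^2)) := by
  have hZ : (p*(cr*r-ci*s)+q*(cr*s+ci*r))^2 ≤ (cr^2+ci^2)*((p^2+q^2)*(r^2+s^2)) := by
    nlinarith [sq_nonneg (p*(cr*s+ci*r) - q*(cr*r-ci*s))]
  have h4 := aux_amgm (lam-a12^2) (lam-a23^2-(cr^2+ci^2)) (a12/2) (cr^2+ci^2)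
    (p^2+q^2) (r^2+s^2) (p*(cr*r-ci*s)+q*(cr*s+ci*r))
    hα hβ (by positivity) (by positivity) (by linear_combination hprod) hZ
  nlinarith [h4]

private lemma norm_app (A : Matrix (Fin 3) (Fin 3) ℂ) (x : EuclideanSpace ℂ (Fin 3)) :
    ‖Matrix.toEuclideanCLM (𝕜 := ℂ) A x‖^2 =
      ‖A.mulVec x 0‖^2 + ‖A.mulVec x 1‖^2 + ‖A.mulVec x 2‖^2 := by
  rw [EuclideanSpace.norm_eq, Real.sq_sqrt (by positivity)]
  simp [Fin.sum_univ_three]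

private lemma hnormsq (x : EuclideanSpace ℂ (Fin 3)) :
    ‖x‖^2 = ‖x 0‖^2 + ‖x 1‖^2 + ‖x 2‖^2 := by
  rw [EuclideanSpace.norm_eq, Real.sq_sqrt (by positivity)]
  simp [Fin.sum_univ_three]


/-- The operator norm of a complex matrix, i.e. its norm as a linear map on the
Euclidean space `ℂⁿ`; it equals `√(spr(X*X))`, the largest singular value. -/
noncomputable def opNorm {n : ℕ} (X : Matrix (Fin n) (Fin n) ℂ) : ℝ :=
  ‖Matrix.toEuclideanCLM (𝕜 := ℂ) X‖

set_option maxHeartbeats 1000000 in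
/-- For `A = [[0, a₁₂, a₁₃], [0, 0, a₂₃], [0, 0, 0]]` with `a₁₂, a₂₃ > 0` real,
`‖A‖² = (1/2)(a₁₂² + a₂₃² + |a₁₃|² + √((a₁₂² + a₂₃² + |a₁₃|²)² - 4 a₁₂² a₂₃²))`. -/
theorem opNorm_sq_three_by_three
    (a12 a23 : ℝ) (h12 : 0 < a12) (h23 : 0 < a23) (a13 : ℂ)
    (A : Matrix (Fin 3) (Fin 3) ℂ)
    (hA : A = !![0, (a12 : ℂ), a13; 0, 0, (a23 : ℂ); 0, 0, 0]) :
    opNorm A ^ 2 =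
      (1 / 2 : ℝ) * (a12 ^ 2 + a23 ^ 2 + ‖a13‖ ^ 2 +
        Real.sqrt ((a12 ^ 2 + a23 ^ 2 + ‖a13‖ ^ 2) ^ 2 -
          4 * a12 ^ 2 * a23 ^ 2)) := by
  set c : ℝ := ‖a13‖ with hc_def
  have hc : 0 ≤ c := norm_nonneg a13
  set S : ℝ := a12^2 + a23^2 + c^2 with hS_def
  have hD : (0:ℝ) ≤ S^2 - 4*a12^2*a23^2 := by
    nlinarith [sq_nonneg (a12^2 - a23^2), sq_nonneg c, sq_nonneg (c^2)]
  set t : ℝ := Real.sqrt (S^2 - 4*a12^2*a23^2) with ht_def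
  have ht0 : 0 ≤ t := Real.sqrt_nonneg _
  have ht2 : t^2 = S^2 - 4*a12^2*a23^2 := Real.sq_sqrt hD
  set lam : ℝ := (S + t)/2 with hlam_def
  have hchar : lam^2 - S*lam + a12^2*a23^2 = 0 := by
    have h : (2*lam - S)^2 = t^2 := by rw [hlam_def]; ring
    nlinarith [h, ht2]
  have hte : t^2 ≥ (a23^2 + c^2 - a12^2)^2 := by
    rw [ht2]; nlinarith [sq_nonneg c, sq_nonneg (a12*c), sq_nonneg a12]
  have hα : 0 ≤ lam - a12^2 := by nlinarith [hte, ht0]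
  have hβ : 0 ≤ lam - a23^2 - c^2 := by nlinarith [hte, ht0]
  have hprod : (lam - a12^2) * (lam - a23^2 - c^2) = a12^2 * c^2 := by
    linear_combination -hchar + (1/2) * ht2
  have hlam0 : 0 ≤ lam := by nlinarith [sq_nonneg a12]
  have hmv : ∀ y : Fin 3 → ℂ,
      A.mulVec y 0 = a12 * y 1 + a13 * y 2 ∧ A.mulVec y 1 = a23 * y 2 ∧ A.mulVec y 2 = 0 := by
    intro y
    refine ⟨?_, ?_, ?_⟩ <;> simp [hA, Matrix.mulVec, dotProduct, Fin.sum_univ_three]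
  have hTx : ∀ x : EuclideanSpace ℂ (Fin 3),
      ‖Matrix.toEuclideanCLM (𝕜 := ℂ) A x‖^2 =
        ‖a12 * x 1 + a13 * x 2‖^2 + ‖a23 * x 2‖^2 := by
    intro x
    rw [norm_app, (hmv x).1, (hmv x).2.1, (hmv x).2.2]
    simp
  have upper : ‖Matrix.toEuclideanCLM (𝕜 := ℂ) A‖ ≤ Real.sqrt lam := by
    apply ContinuousLinearMap.opNorm_le_bound _ (Real.sqrt_nonneg _)
    intro x
    have hsq : ‖Matrix.toEuclideanCLM (𝕜 := ℂ) A x‖^2 ≤ lam * ‖x‖^2 := by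
      rw [hTx x, hnormsq x]
      have hβ' : 0 ≤ lam - a23^2 - ((a13.re)^2 + (a13.im)^2) := by
        have : c^2 = (a13.re)^2 + (a13.im)^2 := by
          rw [hc_def, Complex.sq_norm, Complex.normSq_apply]; ring
        linarith [hβ, this.ge, this.le]
      have hprod' : (lam - a12^2) * (lam - a23^2 - ((a13.re)^2 + (a13.im)^2))
          = a12^2 * ((a13.re)^2 + (a13.im)^2) := by
        have hcc : c^2 = (a13.re)^2 + (a13.im)^2 := by
          rw [hc_def, Complex.sq_norm, Complex.normSq_apply]; ring
        rw [← hcc]; exact hprod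
      have key := quad_le a12 a23 a13.re a13.im lam (x 1).re (x 1).im (x 2).re (x 2).im
        hα hβ' hprod'
      have e1 : ‖↑a12 * x 1 + a13 * x 2‖^2
          = (a12*(x 1).re + (a13.re*(x 2).re - a13.im*(x 2).im))^2
            + (a12*(x 1).im + (a13.re*(x 2).im + a13.im*(x 2).re))^2 := by
        rw [Complex.sq_norm, Complex.normSq_apply]
        simp [Complex.add_re, Complex.add_im, Complex.mul_re, Complex.mul_im]
        ring
      have e2 : ‖↑a23 * x 2‖^2 = a23^2 * ((x 2).re^2 + (x 2).im^2) := by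
        rw [Complex.sq_norm, Complex.normSq_apply]
        simp [Complex.mul_re, Complex.mul_im]
        ring
      have e3 : ‖x 1‖^2 = (x 1).re^2 + (x 1).im^2 := by
        rw [Complex.sq_norm, Complex.normSq_apply]; ring
      have e4 : ‖x 2‖^2 = (x 2).re^2 + (x 2).im^2 := by
        rw [Complex.sq_norm, Complex.normSq_apply]; ring
      have h0 : 0 ≤ ‖x 0‖^2 := by positivity
      rw [e1, e2, e3, e4]
      linarith [key, mul_nonneg hlam0 h0]
    have h1 : ‖Matrix.toEuclideanCLM (𝕜 := ℂ) A x‖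
        = Real.sqrt (‖Matrix.toEuclideanCLM (𝕜 := ℂ) A x‖^2) :=
      (Real.sqrt_sq (norm_nonneg _)).symm
    rw [h1]
    calc Real.sqrt (‖Matrix.toEuclideanCLM (𝕜 := ℂ) A x‖^2)
        ≤ Real.sqrt (lam * ‖x‖^2) := Real.sqrt_le_sqrt hsq
      _ = Real.sqrt lam * ‖x‖ := by
          rw [Real.sqrt_mul hlam0, Real.sqrt_sq (norm_nonneg _)]
  have lower : Real.sqrt lam ≤ ‖Matrix.toEuclideanCLM (𝕜 := ℂ) A‖ := by
    by_cases hcase : lam = a12^2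
    · set v : EuclideanSpace ℂ (Fin 3) := (WithLp.equiv 2 _).symm ![0, 1, 0] with hv
      have hv1 : v 1 = 1 := rfl
      have hv2 : v 2 = (0:ℂ) := rfl
      have hvn : ‖v‖^2 = 1 := by
        rw [hnormsq v]
        have hv0 : v 0 = 0 := rfl
        rw [hv0, hv1, hv2]; simp
      have hTv : ‖Matrix.toEuclideanCLM (𝕜 := ℂ) A v‖^2 = lam := by
        rw [hTx v, hv1, hv2, hcase]
        simp [Complex.norm_real, abs_of_pos h12]
      have hle := (Matrix.toEuclideanCLM (𝕜 := ℂ) A).le_opNorm v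
      have hvnorm : ‖v‖ = 1 := by nlinarith [norm_nonneg v, hvn]
      have hTvnorm : ‖Matrix.toEuclideanCLM (𝕜 := ℂ) A v‖ = Real.sqrt lam := by
        rw [← hTv, Real.sqrt_sq (norm_nonneg _)]
      rw [hvnorm, mul_one, hTvnorm] at hle
      exact hle
    · have hαpos : 0 < lam - a12^2 := lt_of_le_of_ne hα (by intro h; exact hcase (by linarith))
      set al : ℝ := lam - a12^2 with hal
      set v : EuclideanSpace ℂ (Fin 3) := (WithLp.equiv 2 _).symm ![0, (a12:ℂ)*a13, (al:ℂ)] with hv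
      have hv0 : v 0 = 0 := rfl
      have hv1 : v 1 = (a12:ℂ)*a13 := rfl
      have hv2 : v 2 = (al:ℂ) := rfl
      have hvn : ‖v‖^2 = a12^2*c^2 + al^2 := by
        rw [hnormsq v, hv0, hv1, hv2]
        simp [norm_mul, Complex.norm_real, abs_of_pos h12, abs_of_pos hαpos, hc_def]
        ring
      have hvpos : 0 < ‖v‖ := by
        have h2 : (0:ℝ) < a12^2*c^2 + al^2 := by positivity
        rw [← hvn] at h2
        nlinarith [norm_nonneg v]
      have hTv : ‖Matrix.toEuclideanCLM (𝕜 := ℂ) A v‖^2 = lam * ‖v‖^2 := by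
        rw [hTx v, hv1, hv2, hvn]
        have e1 : (a12:ℂ) * ((a12:ℂ)*a13) + a13 * (al:ℂ) = ((lam:ℝ):ℂ) * a13 := by
          rw [hal]; push_cast; ring
        rw [e1]
        have e2 : ‖((lam:ℝ):ℂ) * a13‖^2 = lam^2 * c^2 := by
          rw [norm_mul, Complex.norm_real, Real.norm_eq_abs, abs_of_nonneg hlam0, hc_def]; ring
        have e3 : ‖(a23:ℂ) * (al:ℂ)‖^2 = a23^2 * al^2 := by
          rw [norm_mul, Complex.norm_real, Complex.norm_real, Real.norm_eq_abs, Real.norm_eq_abs,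
            abs_of_pos h23, abs_of_pos hαpos]; ring
        rw [e2, e3, hal]
        linear_combination (a12^2 - lam) * hchar
      have hle := (Matrix.toEuclideanCLM (𝕜 := ℂ) A).le_opNorm v
      have hTvnorm : ‖Matrix.toEuclideanCLM (𝕜 := ℂ) A v‖ = Real.sqrt lam * ‖v‖ := by
        have h : ‖Matrix.toEuclideanCLM (𝕜 := ℂ) A v‖ = Real.sqrt (lam * ‖v‖^2) := by
          rw [← hTv, Real.sqrt_sq (norm_nonneg _)]
        rw [h, Real.sqrt_mul hlam0, Real.sqrt_sq (norm_nonneg _)]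
      rw [hTvnorm] at hle
      exact le_of_mul_le_mul_right hle hvpos
  have hnorm : opNorm A = Real.sqrt lam := le_antisymm upper lower
  rw [hnorm, Real.sq_sqrt hlam0, hlam_def]
  ring
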